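/- Let n, k be integers with n ≥ k + 1 ≥ 3. If G is a vertex-k-maximal graph on n vertices, then |E(G)| ≥ C(n, 2) − C(n − k, 2) = (n − k)k + k(k − 1)/2, where C(a, b) denotes the binomial coefficient. -/

import Mathlib

/-- A finite hypergraph: a finite vertex set together with a finite set of
non-empty edges, each a subset of the vertex set. -/
structure FinsetHypergraph where
  verts : Finset ℕ
  edges : Finset (Finset ℕ)
  edge_sub : ∀ e ∈ edges, e ⊆ verts
  edge_nonempty : ∀ e ∈ edges, e.Nonempty

namespace FinsetHypergraph

/-- `H` is `r`-uniform if every edge has cardinality `r`. -/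
def IsUniform (H : FinsetHypergraph) (r : ℕ) : Prop := ∀ e ∈ H.edges, e.card = r

/-- `H'` is a subhypergraph of `H`. -/
def IsSub (H' H : FinsetHypergraph) : Prop := H'.verts ⊆ H.verts ∧ H'.edges ⊆ H.edges

/-- Two vertices are adjacent if some edge contains both. -/
def Adj (H : FinsetHypergraph) (u v : ℕ) : Prop := ∃ e ∈ H.edges, u ∈ e ∧ v ∈ e

/-- `H` is connected if every pair of vertices is joined by a path
(equivalently, a walk, i.e. is reachable via the adjacency relation). -/
def Connected (H : FinsetHypergraph) : Prop :=
  ∀ u ∈ H.verts, ∀ v ∈ H.verts, Relation.ReflTransGen H.Adj u v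

/-- The subhypergraph of `H` induced by the vertex set `Y`. -/
def induce (H : FinsetHypergraph) (Y : Finset ℕ) : FinsetHypergraph where
  verts := H.verts ∩ Y
  edges := H.edges.filter (fun e => e ⊆ Y)
  edge_sub := by
    intro e he
    simp only [Finset.mem_filter] at he
    exact Finset.subset_inter (H.edge_sub e he.1) he.2
  edge_nonempty := by
    intro e he
    simp only [Finset.mem_filter] at he
    exact H.edge_nonempty e he.1

/-- `X` is a vertex-cut of `H` if deleting `X` leaves a disconnected hypergraph. -/
def IsVertexCut (H : FinsetHypergraph) (X : Finset ℕ) : Prop :=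
  X ⊆ H.verts ∧ ¬ (H.induce (H.verts \ X)).Connected

open Classical in
/-- The vertex-connectivity of `H`: the minimum cardinality of a vertex-cut if one
exists, and `|V(H)| - 1` otherwise. -/
noncomputable def kappa (H : FinsetHypergraph) : ℕ :=
  if ∃ X, H.IsVertexCut X then sInf {m | ∃ X, H.IsVertexCut X ∧ X.card = m}
  else H.verts.card - 1

/-- `κ̄(H)`: the maximum vertex-connectivity over all subhypergraphs of `H`. -/
noncomputable def kappaBar (H : FinsetHypergraph) : ℕ :=
  sSup {m | ∃ H' : FinsetHypergraph, H'.IsSub H ∧ H'.kappa = m}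

/-- `H + e`: add the edge `e` (a non-empty subset of the vertices) to `H`. -/
def addEdge (H : FinsetHypergraph) (e : Finset ℕ) : FinsetHypergraph where
  verts := H.verts
  edges := if e ⊆ H.verts ∧ e.Nonempty then insert e H.edges else H.edges
  edge_sub := by
    intro f hf
    split at hf
    · rcases Finset.mem_insert.mp hf with rfl | hf
      · exact (by assumption : f ⊆ H.verts ∧ f.Nonempty).1
      · exact H.edge_sub f hf
    · exact H.edge_sub f hf
  edge_nonempty := by
    intro f hf
    split at hf
    · rcases Finset.mem_insert.mp hf with rfl | hf
      · exact (by assumption : f ⊆ H.verts ∧ f.Nonempty).2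
      · exact H.edge_nonempty f hf
    · exact H.edge_nonempty f hf

/-- `H + F`: add a set `F` of edges to `H`. -/
def addEdges (H : FinsetHypergraph) (F : Finset (Finset ℕ)) : FinsetHypergraph where
  verts := H.verts
  edges := H.edges ∪ F.filter (fun e => e ⊆ H.verts ∧ e.Nonempty)
  edge_sub := by
    intro f hf
    rcases Finset.mem_union.mp hf with hf | hf
    · exact H.edge_sub f hf
    · exact (Finset.mem_filter.mp hf).2.1
  edge_nonempty := by
    intro f hf
    rcases Finset.mem_union.mp hf with hf | hf
    · exact H.edge_nonempty f hf
    · exact (Finset.mem_filter.mp hf).2.2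

/-- `H` is vertex-`k`-maximal (as an `r`-uniform hypergraph): `κ̄(H) ≤ k`, but adding
any edge of the complement `H^c` creates a subhypergraph of connectivity at least `k + 1`. -/
def VertexKMaximal (H : FinsetHypergraph) (r k : ℕ) : Prop :=
  H.IsUniform r ∧ H.kappaBar ≤ k ∧
    ∀ e : Finset ℕ, e ⊆ H.verts → e.card = r → e ∉ H.edges →
      k + 1 ≤ (H.addEdge e).kappaBar

/-- The complete `r`-uniform hypergraph on the vertex set `V`. -/
def completeHG (V : Finset ℕ) (r : ℕ) : FinsetHypergraph where
  verts := V
  edges := (V.powersetCard r).filter (fun e => e.Nonempty)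
  edge_sub := by
    intro e he
    simp only [Finset.mem_filter, Finset.mem_powersetCard] at he
    exact he.1.1
  edge_nonempty := by
    intro e he
    exact (Finset.mem_filter.mp he).2

/-- The hypergraph on vertex set `V` with no edges. -/
def emptyHG (V : Finset ℕ) : FinsetHypergraph where
  verts := V
  edges := ∅
  edge_sub := by simp
  edge_nonempty := by simp

/-- The `r`-join `H₁ ∨_r H₂`: the union of `H₁` and `H₂` together with all
`r`-element subsets of `V(H₁) ∪ V(H₂)` meeting both `V(H₁)` and `V(H₂)`. -/
def rJoin (H1 H2 : FinsetHypergraph) (r : ℕ) : FinsetHypergraph where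
  verts := H1.verts ∪ H2.verts
  edges := H1.edges ∪ H2.edges ∪
    ((H1.verts ∪ H2.verts).powersetCard r).filter
      (fun e => (e ∩ H1.verts).Nonempty ∧ (e ∩ H2.verts).Nonempty)
  edge_sub := by
    intro e he
    rcases Finset.mem_union.mp he with he | he
    · rcases Finset.mem_union.mp he with he | he
      · exact (H1.edge_sub e he).trans Finset.subset_union_left
      · exact (H2.edge_sub e he).trans Finset.subset_union_right
    · exact (Finset.mem_powersetCard.mp (Finset.mem_filter.mp he).1).1
  edge_nonempty := by
    intro e he
    rcases Finset.mem_union.mp he with he | he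
    · rcases Finset.mem_union.mp he with he | he
      · exact H1.edge_nonempty e he
      · exact H2.edge_nonempty e he
    · obtain ⟨x, hx⟩ := (Finset.mem_filter.mp he).2.1
      exact ⟨x, (Finset.mem_inter.mp hx).1⟩

/-- The union of two hypergraphs. -/
def hUnion (H1 H2 : FinsetHypergraph) : FinsetHypergraph where
  verts := H1.verts ∪ H2.verts
  edges := H1.edges ∪ H2.edges
  edge_sub := by
    intro e he
    rcases Finset.mem_union.mp he with he | he
    · exact (H1.edge_sub e he).trans Finset.subset_union_left
    · exact (H2.edge_sub e he).trans Finset.subset_union_right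
  edge_nonempty := by
    intro e he
    rcases Finset.mem_union.mp he with he | he
    · exact H1.edge_nonempty e he
    · exact H2.edge_nonempty e he

/-- The union of the hypergraphs `f 0, …, f (m-1)`. -/
def unionOver (m : ℕ) (f : ℕ → FinsetHypergraph) : FinsetHypergraph where
  verts := (Finset.range m).biUnion (fun i => (f i).verts)
  edges := (Finset.range m).biUnion (fun i => (f i).edges)
  edge_sub := by
    intro e he
    obtain ⟨i, hi, hei⟩ := Finset.mem_biUnion.mp he
    exact ((f i).edge_sub e hei).trans (Finset.subset_biUnion_of_mem (fun i => (f i).verts) hi)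
  edge_nonempty := by
    intro e he
    obtain ⟨i, _, hei⟩ := Finset.mem_biUnion.mp he
    exact (f i).edge_nonempty e hei

/-- `C` is a component of `G`: a maximal connected subhypergraph. -/
def IsComponent (G C : FinsetHypergraph) : Prop :=
  C.IsSub G ∧ C.Connected ∧
    ∀ C' : FinsetHypergraph, C'.IsSub G → C'.Connected → C.IsSub C' → C' = C

/-- `(S, H₁, H₂)` is a separation triple of `H`: `S` is a minimum vertex-cut,
`H₁ = H[S ∪ V(C₁)]` and `H₂ = H[S ∪ V(C₂)]`, where `C₁` is a component of `H - S`
and `C₂ = H - (S ∪ V(C₁))`. -/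
def IsSeparationTriple (H : FinsetHypergraph) (S : Finset ℕ) (H1 H2 : FinsetHypergraph) : Prop :=
  H.IsVertexCut S ∧ (∀ X : Finset ℕ, H.IsVertexCut X → S.card ≤ X.card) ∧
    ∃ C1 : FinsetHypergraph, IsComponent (H.induce (H.verts \ S)) C1 ∧
      H1 = H.induce (S ∪ C1.verts) ∧
      H2 = H.induce (S ∪ (H.verts \ (S ∪ C1.verts)))

end FinsetHypergraph

namespace FinsetHypergraph

theorem ext' {H1 H2 : FinsetHypergraph} (hv : H1.verts = H2.verts) (he : H1.edges = H2.edges) :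
    H1 = H2 := by
  cases H1; cases H2; simp_all

theorem IsSub.refl' (H : FinsetHypergraph) : H.IsSub H := ⟨le_refl _, le_refl _⟩

theorem IsSub.trans' {H1 H2 H3 : FinsetHypergraph} (h12 : H1.IsSub H2) (h23 : H2.IsSub H3) :
    H1.IsSub H3 := ⟨h12.1.trans h23.1, h12.2.trans h23.2⟩

theorem kappa_le_of_cut {H : FinsetHypergraph} {X : Finset ℕ} (hX : H.IsVertexCut X) :
    H.kappa ≤ X.card := by
  unfold kappa
  rw [if_pos ⟨X, hX⟩]
  exact Nat.sInf_le ⟨X, hX, rfl⟩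

theorem exists_min_cut {H : FinsetHypergraph} (h : ∃ X, H.IsVertexCut X) :
    ∃ S, H.IsVertexCut S ∧ S.card = H.kappa := by
  have hne : {m | ∃ X, H.IsVertexCut X ∧ X.card = m}.Nonempty := by
    obtain ⟨X, hX⟩ := h
    exact ⟨X.card, X, hX, rfl⟩
  have := Nat.sInf_mem hne
  obtain ⟨S, hS, hcard⟩ := this
  refine ⟨S, hS, ?_⟩
  unfold kappa
  rw [if_pos h]
  exact hcard

theorem kappa_eq_of_no_cut {H : FinsetHypergraph} (h : ¬ ∃ X, H.IsVertexCut X) :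
    H.kappa = H.verts.card - 1 := by
  unfold kappa
  rw [if_neg h]

theorem kappa_le_card {H : FinsetHypergraph} : H.kappa ≤ H.verts.card - 1 := by
  by_cases h : ∃ X, H.IsVertexCut X
  · obtain ⟨X, hX⟩ := h
    have h1 : H.kappa ≤ X.card := kappa_le_of_cut hX
    have h2 : X ⊂ H.verts := by
      refine ⟨hX.1, ?_⟩
      intro hsub
      apply hX.2
      intro u hu
      simp only [induce, Finset.mem_inter, Finset.mem_sdiff] at hu
      exact absurd (hsub hu.2.1) hu.2.2
    have := Finset.card_lt_card h2
    omega
  · rw [kappa_eq_of_no_cut h]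

theorem card_ge_of_kappa {H : FinsetHypergraph} {m : ℕ} (h : m + 1 ≤ H.kappa) :
    m + 2 ≤ H.verts.card := by
  have := kappa_le_card (H := H)
  omega

/-- if `kappa H ≥ m` and `T ⊆ verts` has fewer than `m` elements, deleting `T`
leaves a connected hypergraph. -/
theorem connected_del {H : FinsetHypergraph} {m : ℕ} (h : m ≤ H.kappa) {T : Finset ℕ}
    (hT : T ⊆ H.verts) (hcard : T.card < m) : (H.induce (H.verts \ T)).Connected := by
  by_contra hc
  have : H.IsVertexCut T := ⟨hT, hc⟩
  have := kappa_le_of_cut this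
  omega


def kbSet (H : FinsetHypergraph) : Set ℕ := {m | ∃ H' : FinsetHypergraph, H'.IsSub H ∧ H'.kappa = m}

theorem kappaBar_eq (H : FinsetHypergraph) : H.kappaBar = sSup (kbSet H) := rfl

theorem kbSet_nonempty (H : FinsetHypergraph) : (kbSet H).Nonempty :=
  ⟨H.kappa, H, IsSub.refl' H, rfl⟩

theorem kbSet_bdd (H : FinsetHypergraph) : BddAbove (kbSet H) := by
  refine ⟨H.verts.card, ?_⟩
  rintro m ⟨H'', hsub', rfl⟩
  have h1 : H''.kappa ≤ H''.verts.card - 1 := kappa_le_card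
  have h2 : H''.verts.card ≤ H.verts.card := Finset.card_le_card hsub'.1
  omega

theorem kappa_le_kappaBar_of_sub {H' H : FinsetHypergraph} (hsub : H'.IsSub H) :
    H'.kappa ≤ H.kappaBar := by
  rw [kappaBar_eq]
  exact le_csSup (kbSet_bdd H) ⟨H', hsub, rfl⟩

theorem kappa_le_kappaBar (H : FinsetHypergraph) : H.kappa ≤ H.kappaBar :=
  kappa_le_kappaBar_of_sub (IsSub.refl' H)

theorem exists_sub_of_kappaBar_ge {H : FinsetHypergraph} {m : ℕ} (h : m ≤ H.kappaBar) :
    ∃ H' : FinsetHypergraph, H'.IsSub H ∧ m ≤ H'.kappa := by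
  have hmem := Nat.sSup_mem (kbSet_nonempty H) (kbSet_bdd H)
  obtain ⟨H', hsub, hk⟩ := hmem
  rw [kappaBar_eq] at h
  exact ⟨H', hsub, hk ▸ h⟩

/-- reachability stays in a set closed under edges. -/
theorem reach_stays {H : FinsetHypergraph} {P : Finset ℕ}
    (hP : ∀ e ∈ H.edges, (∃ x ∈ e, x ∈ P) → e ⊆ P) {a b : ℕ} (ha : a ∈ P)
    (h : Relation.ReflTransGen H.Adj a b) : b ∈ P := by
  induction h with
  | refl => exact ha
  | tail _ hadj ih =>
    obtain ⟨e, he, hx, hy⟩ := hadj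
    exact hP e he ⟨_, hx, ih⟩ hy

end FinsetHypergraph
namespace FinsetHypergraph

theorem addEdge_verts (G : FinsetHypergraph) (e : Finset ℕ) : (G.addEdge e).verts = G.verts := rfl

theorem addEdge_edges {G : FinsetHypergraph} {e : Finset ℕ} (h1 : e ⊆ G.verts) (h2 : e.Nonempty) :
    (G.addEdge e).edges = insert e G.edges := by
  simp only [addEdge, if_pos (And.intro h1 h2)]

theorem induce_verts (G : FinsetHypergraph) (Y : Finset ℕ) : (G.induce Y).verts = G.verts ∩ Y := rfl

theorem mem_induce_edges {G : FinsetHypergraph} {Y f : Finset ℕ} :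
    f ∈ (G.induce Y).edges ↔ f ∈ G.edges ∧ f ⊆ Y := Finset.mem_filter

/-- The key one-side lemma: a `(k+1)`-connected subhypergraph of `G + e` with `e`
not crossing the separation `(S, C, R)` lies entirely on one side. -/
theorem side_of_witness {k : ℕ} {G : FinsetHypergraph} {S C R : Finset ℕ}
    (hpart : G.verts \ S = C ∪ R)
    (hclo : ∀ f ∈ G.edges, f ⊆ G.verts \ S → (∃ x ∈ f, x ∈ C) → f ⊆ C)
    (hdisj : ∀ x, x ∈ C → x ∈ R → False)
    {e : Finset ℕ} (he1 : e ⊆ G.verts) (he2 : e.Nonempty)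
    (he_nc : (∀ x ∈ e, x ∉ C) ∨ (∀ x ∈ e, x ∉ R))
    {H : FinsetHypergraph} (hsub : H.IsSub (G.addEdge e)) (hk : k + 1 ≤ H.kappa)
    (hScard : S.card ≤ k) :
    H.verts ⊆ S ∪ C ∨ H.verts ⊆ S ∪ R := by
  classical
  have hvH : H.verts ⊆ G.verts := by rw [← addEdge_verts G e]; exact hsub.1
  have hEH : H.edges ⊆ insert e G.edges := by rw [← addEdge_edges he1 he2]; exact hsub.2
  set T : Finset ℕ := S ∩ H.verts with hT
  have hTsub : T ⊆ H.verts := Finset.inter_subset_right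
  have hTcard : T.card < k + 1 := by
    have : T.card ≤ S.card := Finset.card_le_card Finset.inter_subset_left
    omega
  have hconn := connected_del hk hTsub hTcard
  -- every vertex of H outside T lies in C ∪ R
  have hside : ∀ z ∈ H.verts \ T, z ∈ C ∪ R := by
    intro z hz
    rw [← hpart]
    rw [Finset.mem_sdiff] at hz ⊢
    refine ⟨hvH hz.1, fun hzS => hz.2 ?_⟩
    exact Finset.mem_inter.mpr ⟨hzS, hz.1⟩
  -- edges of the deleted hypergraph hitting C stay in C
  have hclo' : ∀ f ∈ (H.induce (H.verts \ T)).edges, (∃ x ∈ f, x ∈ C) → f ⊆ C := by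
    intro f hf hmeet
    rw [mem_induce_edges] at hf
    obtain ⟨hf1, hf2⟩ := hf
    rcases Finset.mem_insert.mp (hEH hf1) with hfe | hfG
    · -- f = e
      subst hfe
      rcases he_nc with hnc | hnc
      · obtain ⟨x, hx1, hx2⟩ := hmeet
        exact absurd hx2 (hnc x hx1)
      · intro y hy
        rcases Finset.mem_union.mp (hside y (hf2 hy)) with h | h
        · exact h
        · exact absurd h (hnc y hy)
    · refine hclo f hfG ?_ hmeet
      intro y hy
      rw [hpart]
      exact hside y (hf2 hy)
  -- the two sides cannot both be met
  have hnotboth : ¬ ((∃ a ∈ H.verts \ T, a ∈ C) ∧ ∃ b ∈ H.verts \ T, b ∈ R) := by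
    rintro ⟨⟨a, ha, haC⟩, ⟨b, hb, hbR⟩⟩
    have hav : a ∈ (H.induce (H.verts \ T)).verts := by
      rw [induce_verts, Finset.mem_inter]
      exact ⟨(Finset.mem_sdiff.mp ha).1, ha⟩
    have hbv : b ∈ (H.induce (H.verts \ T)).verts := by
      rw [induce_verts, Finset.mem_inter]
      exact ⟨(Finset.mem_sdiff.mp hb).1, hb⟩
    have hreach := hconn a hav b hbv
    have hbC : b ∈ C := reach_stays (fun f hf hm => hclo' f hf hm) haC hreach
    exact hdisj b hbC hbR
  rw [not_and_or] at hnotboth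
  rcases hnotboth with h | h
  · right
    intro z hz
    by_cases hzT : z ∈ T
    · exact Finset.mem_union.mpr (Or.inl (Finset.mem_inter.mp hzT).1)
    · have hz' : z ∈ H.verts \ T := Finset.mem_sdiff.mpr ⟨hz, hzT⟩
      rcases Finset.mem_union.mp (hside z hz') with hc | hr
      · exact absurd ⟨z, hz', hc⟩ h
      · exact Finset.mem_union.mpr (Or.inr hr)
  · left
    intro z hz
    by_cases hzT : z ∈ T
    · exact Finset.mem_union.mpr (Or.inl (Finset.mem_inter.mp hzT).1)
    · have hz' : z ∈ H.verts \ T := Finset.mem_sdiff.mpr ⟨hz, hzT⟩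
      rcases Finset.mem_union.mp (hside z hz') with hc | hr
      · exact Finset.mem_union.mpr (Or.inr hc)
      · exact absurd ⟨z, hz', hr⟩ h

end FinsetHypergraph
namespace FinsetHypergraph

theorem exists_witness {k : ℕ} {G : FinsetHypergraph} (hG : G.VertexKMaximal 2 k)
    {e : Finset ℕ} (he1 : e ⊆ G.verts) (he2 : e.card = 2) (he3 : e ∉ G.edges) :
    ∃ H : FinsetHypergraph, H.IsSub (G.addEdge e) ∧ k + 1 ≤ H.kappa ∧ e ∈ H.edges ∧
      k + 2 ≤ H.verts.card := by
  have hbar := hG.2.2 e he1 he2 he3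
  obtain ⟨H, hsub, hk⟩ := exists_sub_of_kappaBar_ge hbar
  have hene : e.Nonempty := Finset.card_pos.mp (by omega)
  have hEH : H.edges ⊆ insert e G.edges := by rw [← addEdge_edges he1 hene]; exact hsub.2
  have heH : e ∈ H.edges := by
    by_contra he'
    have hsubG : H.IsSub G := by
      refine ⟨hsub.1, fun f hf => ?_⟩
      rcases Finset.mem_insert.mp (hEH hf) with rfl | h
      · exact absurd hf he'
      · exact h
    have := kappa_le_kappaBar_of_sub hsubG
    have := hG.2.1
    omega
  exact ⟨H, hsub, hk, heH, card_ge_of_kappa hk⟩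

theorem cut_card_ge_of_max {k : ℕ} {G : FinsetHypergraph} (hG : G.VertexKMaximal 2 k)
    {X : Finset ℕ} (hX : G.IsVertexCut X) : k ≤ X.card := by
  classical
  by_contra hcard
  push_neg at hcard
  have h2 := hX.2
  rw [Connected] at h2
  push_neg at h2
  obtain ⟨u, hu, w, hw, hreach⟩ := h2
  set Gd := G.induce (G.verts \ X) with hGd
  rw [induce_verts, Finset.mem_inter] at hu hw
  replace hu := hu.2
  replace hw := hw.2
  set C : Finset ℕ := (G.verts \ X).filter
    (fun x => Relation.ReflTransGen Gd.Adj u x) with hC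
  have hmemC : ∀ x, x ∈ C ↔ x ∈ G.verts \ X ∧ Relation.ReflTransGen Gd.Adj u x := by
    intro x; rw [hC, Finset.mem_filter]
  have hcloC : ∀ f ∈ Gd.edges, (∃ x ∈ f, x ∈ C) → f ⊆ C := by
    intro f hf ⟨x, hxf, hxC⟩ y hy
    rw [hmemC] at hxC ⊢
    have hfX : f ⊆ G.verts \ X := (mem_induce_edges.mp hf).2
    exact ⟨hfX hy, hxC.2.trans (Relation.ReflTransGen.single ⟨f, hf, hxf, hy⟩)⟩
  have huC : u ∈ C := (hmemC u).mpr ⟨hu, Relation.ReflTransGen.refl⟩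
  have hwC : w ∉ C := fun h => hreach ((hmemC w).mp h).2
  have hne : u ≠ w := fun h => hwC (h ▸ huC)
  set e : Finset ℕ := {u, w} with he
  have he1 : e ⊆ G.verts := by
    intro x hx
    rcases Finset.mem_insert.mp hx with rfl | hx
    · exact (Finset.mem_sdiff.mp hu).1
    · rw [Finset.mem_singleton] at hx
      subst hx
      exact (Finset.mem_sdiff.mp hw).1
  have he2 : e.card = 2 := Finset.card_pair hne
  have he3 : e ∉ G.edges := by
    intro hmem
    apply hwC
    have hfX : e ⊆ G.verts \ X := by
      intro x hx
      rcases Finset.mem_insert.mp hx with rfl | hx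
      · exact hu
      · rw [Finset.mem_singleton] at hx; subst hx; exact hw
    have hfGd : e ∈ Gd.edges := mem_induce_edges.mpr ⟨hmem, hfX⟩
    exact hcloC e hfGd ⟨u, Finset.mem_insert_self u _, huC⟩
      (Finset.mem_insert_of_mem (Finset.mem_singleton_self w))
  obtain ⟨H, hsub, hk, heH, hcardH⟩ := exists_witness hG he1 he2 he3
  have hvH : H.verts ⊆ G.verts := by rw [← addEdge_verts G e]; exact hsub.1
  have hEH : H.edges ⊆ insert e G.edges := by
    rw [← addEdge_edges he1 (Finset.card_pos.mp (by omega))]; exact hsub.2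
  have huH : u ∈ H.verts := H.edge_sub e heH (Finset.mem_insert_self u _)
  have hwH : w ∈ H.verts :=
    H.edge_sub e heH (Finset.mem_insert_of_mem (Finset.mem_singleton_self w))
  -- generic closure for deleted subhypergraphs avoiding a special vertex of e
  have hclo' : ∀ (T : Finset ℕ), (∃ x ∈ e, x ∈ T) →
      ∀ f ∈ (H.induce (H.verts \ (X ∩ H.verts ∪ T))).edges, (∃ x ∈ f, x ∈ C) → f ⊆ C := by
    intro T hxT f hf hmeet
    rw [mem_induce_edges] at hf
    obtain ⟨hf1, hf2⟩ := hf
    rcases Finset.mem_insert.mp (hEH hf1) with rfl | hfG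
    · obtain ⟨x, hx1, hx2⟩ := hxT
      exact ((Finset.mem_sdiff.mp (hf2 hx1)).2 (Finset.mem_union.mpr (Or.inr hx2))).elim
    · apply hcloC f
      · rw [mem_induce_edges]
        refine ⟨hfG, fun y hy => Finset.mem_sdiff.mpr ⟨hvH ((hf2.trans Finset.sdiff_subset) hy), ?_⟩⟩
        intro hyX
        have hyH : y ∈ H.verts := (hf2.trans Finset.sdiff_subset) hy
        have : y ∈ X ∩ H.verts ∪ T := Finset.mem_union.mpr (Or.inl (Finset.mem_inter.mpr ⟨hyX, hyH⟩))
        exact (Finset.mem_sdiff.mp (hf2 hy)).2 this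
      · exact hmeet
  have hT1card : (X ∩ H.verts ∪ {u}).card < k + 1 := by
    have h1 : (X ∩ H.verts ∪ {u}).card ≤ (X ∩ H.verts).card + 1 := by
      have := Finset.card_union_le (X ∩ H.verts) {u}
      simpa using this
    have h2 : (X ∩ H.verts).card ≤ X.card := Finset.card_le_card Finset.inter_subset_left
    omega
  have hT2card : (X ∩ H.verts ∪ {w}).card < k + 1 := by
    have h1 : (X ∩ H.verts ∪ {w}).card ≤ (X ∩ H.verts).card + 1 := by
      have := Finset.card_union_le (X ∩ H.verts) {w}
      simpa using this
    have h2 : (X ∩ H.verts).card ≤ X.card := Finset.card_le_card Finset.inter_subset_left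
    omega
  have hT1sub : X ∩ H.verts ∪ {u} ⊆ H.verts := by
    intro x hx
    rcases Finset.mem_union.mp hx with h | h
    · exact (Finset.mem_inter.mp h).2
    · rw [Finset.mem_singleton] at h; subst h; exact huH
  have hT2sub : X ∩ H.verts ∪ {w} ⊆ H.verts := by
    intro x hx
    rcases Finset.mem_union.mp hx with h | h
    · exact (Finset.mem_inter.mp h).2
    · rw [Finset.mem_singleton] at h; subst h; exact hwH
  have hconn1 := connected_del hk hT1sub hT1card
  have hconn2 := connected_del hk hT2sub hT2card
  have claimA : ∀ a ∈ H.verts \ (X ∩ H.verts ∪ {u}), a ∉ C := by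
    intro a ha haC
    have hwmem : w ∈ H.verts \ (X ∩ H.verts ∪ {u}) := by
      rw [Finset.mem_sdiff]
      refine ⟨hwH, fun h => ?_⟩
      rcases Finset.mem_union.mp h with h | h
      · exact (Finset.mem_sdiff.mp hw).2 (Finset.mem_inter.mp h).1
      · rw [Finset.mem_singleton] at h; exact hne h.symm
    have hav : a ∈ (H.induce (H.verts \ (X ∩ H.verts ∪ {u}))).verts := by
      rw [induce_verts, Finset.mem_inter]
      exact ⟨(Finset.mem_sdiff.mp ha).1, ha⟩
    have hwv : w ∈ (H.induce (H.verts \ (X ∩ H.verts ∪ {u}))).verts := by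
      rw [induce_verts, Finset.mem_inter]
      exact ⟨hwH, hwmem⟩
    have hreach' := hconn1 a hav w hwv
    have : w ∈ C := reach_stays
      (hclo' {u} ⟨u, Finset.mem_insert_self u _, Finset.mem_singleton_self u⟩) haC hreach'
    exact hwC this
  have claimB : ∀ b ∈ H.verts \ (X ∩ H.verts ∪ {w}), b ∈ C := by
    intro b hb
    have humem : u ∈ H.verts \ (X ∩ H.verts ∪ {w}) := by
      rw [Finset.mem_sdiff]
      refine ⟨huH, fun h => ?_⟩
      rcases Finset.mem_union.mp h with h | h
      · exact (Finset.mem_sdiff.mp hu).2 (Finset.mem_inter.mp h).1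
      · rw [Finset.mem_singleton] at h; exact hne h
    have huv : u ∈ (H.induce (H.verts \ (X ∩ H.verts ∪ {w}))).verts := by
      rw [induce_verts, Finset.mem_inter]
      exact ⟨huH, humem⟩
    have hbv : b ∈ (H.induce (H.verts \ (X ∩ H.verts ∪ {w}))).verts := by
      rw [induce_verts, Finset.mem_inter]
      exact ⟨(Finset.mem_sdiff.mp hb).1, hb⟩
    have hreach' := hconn2 u huv b hbv
    exact reach_stays
      (hclo' {w} ⟨w, Finset.mem_insert_of_mem (Finset.mem_singleton_self w),
        Finset.mem_singleton_self w⟩) huC hreach'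
  have hsubXe : H.verts ⊆ X ∪ e := by
    intro z hz
    by_contra hz'
    rw [Finset.mem_union] at hz'
    push_neg at hz'
    have hzu : z ≠ u := fun h => hz'.2 (h ▸ Finset.mem_insert_self u _)
    have hzw : z ≠ w := fun h => hz'.2 (h ▸ Finset.mem_insert_of_mem (Finset.mem_singleton_self w))
    have h1 : z ∈ H.verts \ (X ∩ H.verts ∪ {u}) := by
      rw [Finset.mem_sdiff]
      refine ⟨hz, fun h => ?_⟩
      rcases Finset.mem_union.mp h with h | h
      · exact hz'.1 (Finset.mem_inter.mp h).1
      · rw [Finset.mem_singleton] at h; exact hzu h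
    have h2 : z ∈ H.verts \ (X ∩ H.verts ∪ {w}) := by
      rw [Finset.mem_sdiff]
      refine ⟨hz, fun h => ?_⟩
      rcases Finset.mem_union.mp h with h | h
      · exact hz'.1 (Finset.mem_inter.mp h).1
      · rw [Finset.mem_singleton] at h; exact hzw h
    exact claimA z h1 (claimB z h2)
  have : H.verts.card ≤ X.card + 2 := by
    calc H.verts.card ≤ (X ∪ e).card := Finset.card_le_card hsubXe
    _ ≤ X.card + e.card := Finset.card_union_le X e
    _ = X.card + 2 := by rw [he2]
  omega

end FinsetHypergraph
namespace FinsetHypergraph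

theorem two_mul_choose_two (n : ℕ) : 2 * n.choose 2 = n * (n - 1) := by
  induction n with
  | zero => rfl
  | succ m ih =>
    rw [Nat.choose_succ_succ]
    have h1 : m.choose 1 = m := Nat.choose_one_right m
    cases m with
    | zero => rfl
    | succ p =>
      simp only [Nat.succ_sub_one] at ih ⊢
      rw [Nat.mul_add, h1, ih]
      ring

theorem choose_split (a b : ℕ) : (a + b).choose 2 = a.choose 2 + a * b + b.choose 2 := by
  have h := two_mul_choose_two (a + b)
  have ha := two_mul_choose_two a
  have hb := two_mul_choose_two b
  have key : (a + b) * (a + b - 1) = a * (a - 1) + 2 * (a * b) + b * (b - 1) := by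
    cases a with
    | zero => simp
    | succ p =>
      cases b with
      | zero => simp
      | succ q =>
        simp only [Nat.succ_sub_one]
        have : p + 1 + (q + 1) - 1 = p + q + 1 := by omega
        rw [this]
        ring
  omega

/-- a vertex-`k`-maximal graph on at most `k+1` vertices is complete. -/
theorem complete_of_small {k : ℕ} {G : FinsetHypergraph} (hG : G.VertexKMaximal 2 k)
    (hn : G.verts.card ≤ k + 1) : G.edges = G.verts.powersetCard 2 := by
  apply Finset.Subset.antisymm
  · intro e he
    exact Finset.mem_powersetCard.mpr ⟨G.edge_sub e he, hG.1 e he⟩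
  · intro e he
    rw [Finset.mem_powersetCard] at he
    by_contra he'
    obtain ⟨H, hsub, hk, heH, hcardH⟩ := exists_witness hG he.1 he.2 he'
    have hvH : H.verts ⊆ G.verts := by rw [← addEdge_verts G _]; exact hsub.1
    have := Finset.card_le_card hvH
    omega

end FinsetHypergraph
namespace FinsetHypergraph

theorem kappaBar_mono {H' H : FinsetHypergraph} (h : H'.IsSub H) : H'.kappaBar ≤ H.kappaBar := by
  rw [kappaBar_eq, kappaBar_eq]
  apply csSup_le_csSup (kbSet_bdd H) (kbSet_nonempty H')
  rintro m ⟨H'', hsub, rfl⟩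
  exact ⟨H'', IsSub.trans' hsub h, rfl⟩

theorem addEdges_verts (G : FinsetHypergraph) (F : Finset (Finset ℕ)) :
    (G.addEdges F).verts = G.verts := rfl

theorem addEdges_edges_of {G : FinsetHypergraph} {F : Finset (Finset ℕ)}
    (h : ∀ e ∈ F, e ⊆ G.verts ∧ e.Nonempty) : (G.addEdges F).edges = G.edges ∪ F := by
  show G.edges ∪ F.filter _ = G.edges ∪ F
  rw [Finset.filter_true_of_mem h]

theorem addEdges_empty (G : FinsetHypergraph) : G.addEdges ∅ = G := by
  refine ext' rfl ?_
  show G.edges ∪ Finset.filter _ ∅ = G.edges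
  simp

theorem induce_sub (G : FinsetHypergraph) (Y : Finset ℕ) : (G.induce Y).IsSub G :=
  ⟨Finset.inter_subset_left, Finset.filter_subset _ _⟩

/-- Given a min-cut-style separation `(S, C, R)` of a vertex-`k`-maximal graph
and a maximal admissible set `A` of missing `S`-pairs, the hypergraph
`G[S ∪ C] + A` is vertex-`k`-maximal. -/
theorem hat_max {k : ℕ} {G : FinsetHypergraph} {S C R : Finset ℕ}
    (hG : G.VertexKMaximal 2 k)
    (hSv : S ⊆ G.verts) (hSk : S.card ≤ k)
    (hpart : G.verts \ S = C ∪ R)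
    (hdisj : ∀ x, x ∈ C → x ∈ R → False)
    (hcloC : ∀ f ∈ G.edges, f ⊆ G.verts \ S → (∃ x ∈ f, x ∈ C) → f ⊆ C)
    {A : Finset (Finset ℕ)}
    (hAF : A ⊆ (S.powersetCard 2).filter (· ∉ G.edges))
    (hAk : ((G.induce (S ∪ C)).addEdges A).kappaBar ≤ k)
    (hAmax : ∀ e ∈ (S.powersetCard 2).filter (· ∉ G.edges), e ∉ A →
      k + 1 ≤ ((G.induce (S ∪ C)).addEdges (insert e A)).kappaBar) :
    ((G.induce (S ∪ C)).addEdges A).VertexKMaximal 2 k := by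
  classical
  set F : Finset (Finset ℕ) := (S.powersetCard 2).filter (· ∉ G.edges) with hF
  have hCv : C ⊆ G.verts := by
    intro x hx
    have : x ∈ G.verts \ S := hpart ▸ Finset.mem_union.mpr (Or.inl hx)
    exact (Finset.mem_sdiff.mp this).1
  have hY1v : S ∪ C ⊆ G.verts := Finset.union_subset hSv hCv
  set G1 := G.induce (S ∪ C) with hG1
  have hG1verts : G1.verts = S ∪ C := by
    rw [hG1, induce_verts]
    exact Finset.inter_eq_right.mpr hY1v
  have hFmem : ∀ e ∈ F, e ⊆ S ∧ e.card = 2 ∧ e ∉ G.edges := by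
    intro e he
    rw [hF, Finset.mem_filter, Finset.mem_powersetCard] at he
    exact ⟨he.1.1, he.1.2, he.2⟩
  have hAcond : ∀ e ∈ A, e ⊆ G1.verts ∧ e.Nonempty := by
    intro e he
    obtain ⟨h1, h2, _⟩ := hFmem e (hAF he)
    refine ⟨?_, Finset.card_pos.mp (by omega)⟩
    rw [hG1verts]
    exact h1.trans Finset.subset_union_left
  have hhatedges : (G1.addEdges A).edges = G1.edges ∪ A := addEdges_edges_of hAcond
  refine ⟨?_, hAk, ?_⟩
  · -- uniform
    intro e he
    rw [hhatedges, Finset.mem_union] at he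
    rcases he with he | he
    · exact hG.1 e ((induce_sub G _).2 he)
    · exact (hFmem e (hAF he)).2.1
  · intro e hev hec hene
    have hhatverts : (G1.addEdges A).verts = S ∪ C := by
      rw [addEdges_verts, hG1verts]
    rw [hhatverts] at hev
    rw [hhatedges, Finset.mem_union] at hene
    push_neg at hene
    by_cases heS : e ⊆ S
    · -- a missing pair inside S
      have heG : e ∉ G.edges := by
        intro h
        exact hene.1 (mem_induce_edges.mpr ⟨h, heS.trans Finset.subset_union_left⟩)
      have heF : e ∈ F := by
        rw [hF, Finset.mem_filter, Finset.mem_powersetCard]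
        exact ⟨⟨heS, hec⟩, heG⟩
      have hkey := hAmax e heF hene.2
      have heq : (G1.addEdges A).addEdge e = G1.addEdges (insert e A) := by
        refine ext' rfl ?_
        have hcond : e ⊆ (G1.addEdges A).verts ∧ e.Nonempty := by
          rw [hhatverts]
          exact ⟨hev, Finset.card_pos.mp (by omega)⟩
        rw [addEdge_edges hcond.1 hcond.2, hhatedges,
          addEdges_edges_of (fun f hf => by
            rcases Finset.mem_insert.mp hf with rfl | hf
            · rw [hG1verts]; exact ⟨hev, Finset.card_pos.mp (by omega)⟩
            · exact hAcond f hf)]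
        rw [Finset.union_insert]
      rw [heq]
      exact hkey
    · -- a missing pair with an endpoint in C
      obtain ⟨x, hxe, hxS⟩ := Finset.not_subset.mp heS
      have hxC : x ∈ C := by
        rcases Finset.mem_union.mp (hev hxe) with h | h
        · exact absurd h hxS
        · exact h
      have heG : e ∉ G.edges := by
        intro h
        exact hene.1 (mem_induce_edges.mpr ⟨h, hev⟩)
      obtain ⟨H, hsub, hk, heH, hcardH⟩ := exists_witness hG (hev.trans hY1v) hec heG
      have hnc : ∀ y ∈ e, y ∉ R := by
        intro y hy hyR
        rcases Finset.mem_union.mp (hev hy) with h | h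
        · have : y ∈ G.verts \ S := hpart ▸ Finset.mem_union.mpr (Or.inr hyR)
          exact (Finset.mem_sdiff.mp this).2 h
        · exact hdisj y h hyR
      have hside := side_of_witness hpart hcloC hdisj (hev.trans hY1v)
        (Finset.card_pos.mp (by omega)) (Or.inr hnc) hsub hk hSk
      have hHY1 : H.verts ⊆ S ∪ C := by
        rcases hside with h | h
        · exact h
        · exact absurd (h (H.edge_sub e heH hxe)) (fun hmem => by
            rcases Finset.mem_union.mp hmem with h' | h'
            · exact hxS h'
            · exact hdisj x hxC h')
      -- H is a subhypergraph of Ĝ₁ + e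
      have hEH : H.edges ⊆ insert e G.edges := by
        rw [← addEdge_edges (hev.trans hY1v) (Finset.card_pos.mp (by omega))]
        exact hsub.2
      have hcond : e ⊆ (G1.addEdges A).verts ∧ e.Nonempty := by
        rw [hhatverts]
        exact ⟨hev, Finset.card_pos.mp (by omega)⟩
      have hsub' : H.IsSub ((G1.addEdges A).addEdge e) := by
        constructor
        · show H.verts ⊆ (G1.addEdges A).verts
          rw [hhatverts]
          exact hHY1
        · show H.edges ⊆ ((G1.addEdges A).addEdge e).edges
          rw [addEdge_edges hcond.1 hcond.2, hhatedges]
          intro f hf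
          rcases Finset.mem_insert.mp (hEH hf) with rfl | hfG
          · exact Finset.mem_insert_self _ _
          · refine Finset.mem_insert_of_mem (Finset.mem_union.mpr (Or.inl ?_))
            exact mem_induce_edges.mpr ⟨hfG, (H.edge_sub f hf).trans hHY1⟩
      calc k + 1 ≤ H.kappa := hk
      _ ≤ _ := kappa_le_kappaBar_of_sub hsub'

end FinsetHypergraph
namespace FinsetHypergraph

theorem main_bound {k : ℕ} (hk : 2 ≤ k) :
    ∀ n : ℕ, ∀ G : FinsetHypergraph, G.verts.card = n → k + 1 ≤ n → G.VertexKMaximal 2 k →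
      (n - k) * k + k.choose 2 ≤ G.edges.card := by
  intro n
  induction n using Nat.strong_induction_on with
  | _ n ih =>
  intro G hcard hn hG
  classical
  by_cases hsmall : n ≤ k + 1
  · -- base case : G is complete on k+1 vertices
    have hn1 : n = k + 1 := le_antisymm hsmall hn
    have hcomp := complete_of_small hG (by rw [hcard]; omega)
    have hEcard : G.edges.card = (k + 1).choose 2 := by
      rw [hcomp, Finset.card_powersetCard, hcard, hn1]
    have h2 : (k + 1).choose 2 = k.choose 1 + k.choose 2 := Nat.choose_succ_succ k 1
    have h3 : k.choose 1 = k := Nat.choose_one_right k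
    have h4 : n - k = 1 := by omega
    rw [hEcard, h4, one_mul]
    omega
  · push_neg at hsmall
    have hbig : k + 2 ≤ n := hsmall
    -- there is a vertex cut
    have hex : ∃ X, G.IsVertexCut X := by
      by_contra hno
      have h1 := kappa_eq_of_no_cut hno
      have h2 := kappa_le_kappaBar G
      have h3 := hG.2.1
      rw [hcard] at h1
      omega
    obtain ⟨S, hS, hSkappa⟩ := exists_min_cut hex
    have hSk : S.card ≤ k := by
      have h1 := kappa_le_kappaBar G
      have h2 := hG.2.1
      omega
    have hScard : S.card = k := le_antisymm hSk (cut_card_ge_of_max hG hS)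
    -- the two sides of the cut
    have h2 := hS.2
    rw [Connected] at h2
    push_neg at h2
    obtain ⟨u0, hu0, w0, hw0, hnr⟩ := h2
    set Gd := G.induce (G.verts \ S) with hGd
    rw [induce_verts, Finset.mem_inter] at hu0 hw0
    replace hu0 := hu0.2
    replace hw0 := hw0.2
    set C1 : Finset ℕ := (G.verts \ S).filter
      (fun x => Relation.ReflTransGen Gd.Adj u0 x) with hC1
    set R : Finset ℕ := (G.verts \ S) \ C1 with hR
    have hmemC : ∀ x, x ∈ C1 ↔ x ∈ G.verts \ S ∧ Relation.ReflTransGen Gd.Adj u0 x := by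
      intro x; rw [hC1, Finset.mem_filter]
    have hC1sub : C1 ⊆ G.verts \ S := Finset.filter_subset _ _
    have hpart : G.verts \ S = C1 ∪ R := (Finset.union_sdiff_of_subset hC1sub).symm
    have hdisj : ∀ x, x ∈ C1 → x ∈ R → False := by
      intro x h1 h2
      rw [hR, Finset.mem_sdiff] at h2
      exact h2.2 h1
    have hu0C : u0 ∈ C1 := (hmemC u0).mpr ⟨hu0, Relation.ReflTransGen.refl⟩
    have hw0R : w0 ∈ R := by
      rw [hR, Finset.mem_sdiff]
      exact ⟨hw0, fun h => hnr ((hmemC w0).mp h).2⟩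
    have hclo : ∀ f ∈ G.edges, f ⊆ G.verts \ S → (∃ x ∈ f, x ∈ C1) → f ⊆ C1 := by
      intro f hf hfs ⟨x, hxf, hxC⟩ y hy
      rw [hmemC] at hxC ⊢
      have hfGd : f ∈ Gd.edges := mem_induce_edges.mpr ⟨hf, hfs⟩
      exact ⟨hfs hy, hxC.2.trans (Relation.ReflTransGen.single ⟨f, hfGd, hxf, hy⟩)⟩
    have hcloR : ∀ f ∈ G.edges, f ⊆ G.verts \ S → (∃ x ∈ f, x ∈ R) → f ⊆ R := by
      intro f hf hfs ⟨y, hyf, hyR⟩ z hz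
      have hz' : z ∈ C1 ∪ R := hpart ▸ hfs hz
      rcases Finset.mem_union.mp hz' with hzC | hzR
      · exact absurd (hclo f hf hfs ⟨z, hz, hzC⟩ hyf) (fun h => hdisj y h hyR)
      · exact hzR
    have hdisjR : ∀ x, x ∈ R → x ∈ C1 → False := fun x h1 h2 => hdisj x h2 h1
    have hpartR : G.verts \ S = R ∪ C1 := by rw [hpart, Finset.union_comm]
    -- names for the two sides
    set Y1 : Finset ℕ := S ∪ C1 with hY1
    set Y2 : Finset ℕ := S ∪ R with hY2
    have hCv : C1 ⊆ G.verts := fun x hx => (Finset.mem_sdiff.mp (hC1sub hx)).1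
    have hRv : R ⊆ G.verts := fun x hx =>
      (Finset.mem_sdiff.mp (Finset.sdiff_subset (s := G.verts \ S) hx)).1
    have hY1v : Y1 ⊆ G.verts := Finset.union_subset hS.1 hCv
    have hY2v : Y2 ⊆ G.verts := Finset.union_subset hS.1 hRv
    set G1 := G.induce Y1 with hG1
    set G2 := G.induce Y2 with hG2
    have hG1verts : G1.verts = Y1 := by rw [hG1, induce_verts]; exact Finset.inter_eq_right.mpr hY1v
    have hG2verts : G2.verts = Y2 := by rw [hG2, induce_verts]; exact Finset.inter_eq_right.mpr hY2v
    -- disjointness of S from the sides and cards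
    have hdSC : ∀ x, x ∈ S → x ∈ C1 → False := fun x h1 h2 =>
      (Finset.mem_sdiff.mp (hC1sub h2)).2 h1
    have hdSR : ∀ x, x ∈ S → x ∈ R → False := fun x h1 h2 =>
      (Finset.mem_sdiff.mp (Finset.sdiff_subset (s := G.verts \ S) h2)).2 h1
    have hY1card : Y1.card = k + C1.card := by
      rw [hY1, Finset.card_union_of_disjoint (Finset.disjoint_left.mpr
        (fun {x} h1 h2 => hdSC x h1 h2)), hScard]
    have hY2card : Y2.card = k + R.card := by
      rw [hY2, Finset.card_union_of_disjoint (Finset.disjoint_left.mpr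
        (fun {x} h1 h2 => hdSR x h1 h2)), hScard]
    have hncard : n = k + C1.card + R.card := by
      have h1 : G.verts.card = S.card + (G.verts \ S).card := by
        rw [← Finset.card_union_of_disjoint Finset.disjoint_sdiff,
          Finset.union_sdiff_of_subset hS.1]
      have h2 : (G.verts \ S).card = C1.card + R.card := by
        rw [hpart, Finset.card_union_of_disjoint (Finset.disjoint_left.mpr
          (fun {x} h1 h2 => hdisj x h1 h2))]
      omega
    -- every edge lies in a side
    have hnocross : ∀ f ∈ G.edges, (∃ x ∈ f, x ∈ C1) → (∃ y ∈ f, y ∈ R) → False := by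
      rintro f hf ⟨x, hxf, hxC⟩ ⟨y, hyf, hyR⟩
      have hxy : x ≠ y := fun h => hdisj x hxC (h ▸ hyR)
      have hsub2 : ({x, y} : Finset ℕ) ⊆ f := by
        intro z hz
        rcases Finset.mem_insert.mp hz with rfl | hz
        · exact hxf
        · rw [Finset.mem_singleton] at hz; subst hz; exact hyf
      have hfeq : f = {x, y} := by
        refine (Finset.eq_of_subset_of_card_le hsub2 ?_).symm
        rw [hG.1 f hf, Finset.card_pair hxy]
      have hfs : f ⊆ G.verts \ S := by
        rw [hfeq]
        intro z hz
        rcases Finset.mem_insert.mp hz with rfl | hz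
        · exact hC1sub hxC
        · rw [Finset.mem_singleton] at hz; subst hz
          exact Finset.sdiff_subset (s := G.verts \ S) hyR
      exact hdisj y (hclo f hf hfs ⟨x, hxf, hxC⟩ hyf) hyR
    have hedge_side : ∀ f ∈ G.edges, f ⊆ Y1 ∨ f ⊆ Y2 := by
      intro f hf
      by_cases hmc : ∃ x ∈ f, x ∈ C1
      · left
        intro z hz
        have hzv : z ∈ G.verts := G.edge_sub f hf hz
        by_cases hzS : z ∈ S
        · exact Finset.mem_union.mpr (Or.inl hzS)
        · have : z ∈ C1 ∪ R := hpart ▸ Finset.mem_sdiff.mpr ⟨hzv, hzS⟩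
          rcases Finset.mem_union.mp this with h | h
          · exact Finset.mem_union.mpr (Or.inr h)
          · exact absurd ⟨z, hz, h⟩ (fun hy => hnocross f hf hmc hy)
      · right
        intro z hz
        have hzv : z ∈ G.verts := G.edge_sub f hf hz
        by_cases hzS : z ∈ S
        · exact Finset.mem_union.mpr (Or.inl hzS)
        · have : z ∈ C1 ∪ R := hpart ▸ Finset.mem_sdiff.mpr ⟨hzv, hzS⟩
          rcases Finset.mem_union.mp this with h | h
          · exact absurd ⟨z, hz, h⟩ hmc
          · exact Finset.mem_union.mpr (Or.inr h)
    -- edge counting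
    have hunion : G1.edges ∪ G2.edges = G.edges := by
      apply Finset.Subset.antisymm
      · intro f hf
        rcases Finset.mem_union.mp hf with h | h
        · exact (mem_induce_edges.mp h).1
        · exact (mem_induce_edges.mp h).1
      · intro f hf
        rcases hedge_side f hf with h | h
        · exact Finset.mem_union.mpr (Or.inl (mem_induce_edges.mpr ⟨hf, h⟩))
        · exact Finset.mem_union.mpr (Or.inr (mem_induce_edges.mpr ⟨hf, h⟩))
    have hinter : G1.edges ∩ G2.edges = G.edges.filter (· ⊆ S) := by
      ext f
      rw [Finset.mem_inter, Finset.mem_filter, mem_induce_edges, mem_induce_edges]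
      constructor
      · rintro ⟨⟨hf, h1⟩, ⟨_, h2⟩⟩
        refine ⟨hf, fun z hz => ?_⟩
        rcases Finset.mem_union.mp (h1 hz) with h | h
        · exact h
        · rcases Finset.mem_union.mp (h2 hz) with h' | h'
          · exact h'
          · exact absurd h' (fun h'' => hdisj z h h'')
      · rintro ⟨hf, hfS⟩
        exact ⟨⟨hf, hfS.trans Finset.subset_union_left⟩, ⟨hf, hfS.trans Finset.subset_union_left⟩⟩
    have hcardsum : G.edges.card + (G.edges.filter (· ⊆ S)).card
        = G1.edges.card + G2.edges.card := by
      have h := Finset.card_union_add_card_inter G1.edges G2.edges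
      rw [hunion, hinter] at h
      exact h
    -- missing pairs inside S
    set F : Finset (Finset ℕ) := (S.powersetCard 2).filter (· ∉ G.edges) with hF
    have hESF : (G.edges.filter (· ⊆ S)).card + F.card = k.choose 2 := by
      have heq : G.edges.filter (· ⊆ S) = (S.powersetCard 2).filter (· ∈ G.edges) := by
        ext f
        rw [Finset.mem_filter, Finset.mem_filter, Finset.mem_powersetCard]
        constructor
        · rintro ⟨hf, hfS⟩
          exact ⟨⟨hfS, hG.1 f hf⟩, hf⟩
        · rintro ⟨⟨hfS, _⟩, hf⟩
          exact ⟨hf, hfS⟩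
      rw [heq, hF]
      have := Finset.card_filter_add_card_filter_not
        (s := S.powersetCard 2) (p := (· ∈ G.edges))
      rw [Finset.card_powersetCard, hScard] at this
      exact this
    -- maximal admissible sets of missing S-pairs on each side
    have hbuild : ∀ Gi : FinsetHypergraph, Gi.kappaBar ≤ k →
        ∃ A : Finset (Finset ℕ), A ⊆ F ∧ (Gi.addEdges A).kappaBar ≤ k ∧
          ∀ e ∈ F, e ∉ A → k + 1 ≤ (Gi.addEdges (insert e A)).kappaBar := by
      intro Gi hGik
      set 𝒜 : Finset (Finset (Finset ℕ)) :=
        F.powerset.filter (fun A => (Gi.addEdges A).kappaBar ≤ k) with h𝒜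
      have hmem𝒜 : ∀ A, A ∈ 𝒜 ↔ A ⊆ F ∧ (Gi.addEdges A).kappaBar ≤ k := by
        intro A
        rw [h𝒜, Finset.mem_filter, Finset.mem_powerset]
      have hne : 𝒜.Nonempty := by
        refine ⟨∅, (hmem𝒜 ∅).mpr ⟨Finset.empty_subset _, ?_⟩⟩
        rw [addEdges_empty]
        exact hGik
      obtain ⟨A, hA𝒜, hAmax⟩ := Finset.exists_max_image 𝒜 Finset.card hne
      rw [hmem𝒜] at hA𝒜
      refine ⟨A, hA𝒜.1, hA𝒜.2, ?_⟩
      intro e heF heA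
      by_contra hle
      push_neg at hle
      have hmem : insert e A ∈ 𝒜 := (hmem𝒜 _).mpr
        ⟨Finset.insert_subset heF hA𝒜.1, by omega⟩
      have := hAmax _ hmem
      rw [Finset.card_insert_of_notMem heA] at this
      omega
    obtain ⟨A, hAF, hAk, hAmax⟩ := hbuild G1 (le_trans (kappaBar_mono (induce_sub G Y1)) hG.2.1)
    obtain ⟨B, hBF, hBk, hBmax⟩ := hbuild G2 (le_trans (kappaBar_mono (induce_sub G Y2)) hG.2.1)
    -- the two augmented sides are vertex-k-maximal
    have hhat1 : (G1.addEdges A).VertexKMaximal 2 k :=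
      hat_max hG hS.1 hSk hpart hdisj hclo hAF hAk hAmax
    have hhat2 : (G2.addEdges B).VertexKMaximal 2 k :=
      hat_max hG hS.1 hSk hpartR hdisjR hcloR hBF hBk hBmax
    -- apply the induction hypothesis to both sides
    have hC1ne : 1 ≤ C1.card := Finset.card_pos.mpr ⟨u0, hu0C⟩
    have hRne : 1 ≤ R.card := Finset.card_pos.mpr ⟨w0, hw0R⟩
    have hhat1verts : (G1.addEdges A).verts.card = k + C1.card := by
      rw [addEdges_verts, hG1verts, hY1card]
    have hhat2verts : (G2.addEdges B).verts.card = k + R.card := by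
      rw [addEdges_verts, hG2verts, hY2card]
    have hIH1 := ih (k + C1.card) (by omega) (G1.addEdges A) hhat1verts (by omega) hhat1
    have hIH2 := ih (k + R.card) (by omega) (G2.addEdges B) hhat2verts (by omega) hhat2
    -- edge counts of the augmented sides
    have hAcond : ∀ e ∈ A, e ⊆ G1.verts ∧ e.Nonempty := by
      intro e he
      have hm := Finset.mem_filter.mp (hAF he)
      have hm2 := Finset.mem_powersetCard.mp hm.1
      refine ⟨?_, Finset.card_pos.mp (by omega)⟩
      rw [hG1verts]
      exact hm2.1.trans Finset.subset_union_left
    have hBcond : ∀ e ∈ B, e ⊆ G2.verts ∧ e.Nonempty := by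
      intro e he
      have hm := Finset.mem_filter.mp (hBF he)
      have hm2 := Finset.mem_powersetCard.mp hm.1
      refine ⟨?_, Finset.card_pos.mp (by omega)⟩
      rw [hG2verts]
      exact hm2.1.trans Finset.subset_union_left
    have hhat1card : (G1.addEdges A).edges.card = G1.edges.card + A.card := by
      rw [addEdges_edges_of hAcond]
      refine Finset.card_union_of_disjoint (Finset.disjoint_left.mpr ?_)
      intro e he1 heA
      exact (Finset.mem_filter.mp (hAF heA)).2 ((mem_induce_edges.mp he1).1)
    have hhat2card : (G2.addEdges B).edges.card = G2.edges.card + B.card := by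
      rw [addEdges_edges_of hBcond]
      refine Finset.card_union_of_disjoint (Finset.disjoint_left.mpr ?_)
      intro e he1 heB
      exact (Finset.mem_filter.mp (hBF heB)).2 ((mem_induce_edges.mp he1).1)
    -- A and B are disjoint
    have hdisjAB : ∀ e, e ∈ A → e ∈ B → False := by
      intro e heA heB
      have hm := Finset.mem_filter.mp (hAF heA)
      have hm2 := Finset.mem_powersetCard.mp hm.1
      have heS : e ⊆ S := hm2.1
      have hec : e.card = 2 := hm2.2
      have heG : e ∉ G.edges := hm.2
      obtain ⟨H, hsub, hkH, heH, hcardH⟩ := exists_witness hG (heS.trans hS.1) hec heG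
      have hene : e.Nonempty := Finset.card_pos.mp (by omega)
      have hEH : H.edges ⊆ insert e G.edges := by
        rw [← addEdge_edges (heS.trans hS.1) hene]
        exact hsub.2
      have hvH : H.verts ⊆ G.verts := hsub.1
      have hnc : ∀ x ∈ e, x ∉ C1 := fun x hx h => hdSC x (heS hx) h
      have hside := side_of_witness hpart hclo hdisj (heS.trans hS.1) hene
        (Or.inl hnc) hsub hkH hSk
      rcases hside with hY | hY
      · -- H lives in side 1, contradicting admissibility of A
        have hsub' : H.IsSub (G1.addEdges A) := by
          constructor
          · show H.verts ⊆ G1.verts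
            rw [hG1verts]
            exact hY
          · show H.edges ⊆ (G1.addEdges A).edges
            rw [addEdges_edges_of hAcond]
            intro f hf
            rcases Finset.mem_insert.mp (hEH hf) with rfl | hfG
            · exact Finset.mem_union.mpr (Or.inr heA)
            · exact Finset.mem_union.mpr (Or.inl
                (mem_induce_edges.mpr ⟨hfG, (H.edge_sub f hf).trans hY⟩))
        have := kappa_le_kappaBar_of_sub hsub'
        omega
      · have hsub' : H.IsSub (G2.addEdges B) := by
          constructor
          · show H.verts ⊆ G2.verts
            rw [hG2verts]
            exact hY
          · show H.edges ⊆ (G2.addEdges B).edges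
            rw [addEdges_edges_of hBcond]
            intro f hf
            rcases Finset.mem_insert.mp (hEH hf) with rfl | hfG
            · exact Finset.mem_union.mpr (Or.inr heB)
            · exact Finset.mem_union.mpr (Or.inl
                (mem_induce_edges.mpr ⟨hfG, (H.edge_sub f hf).trans hY⟩))
        have := kappa_le_kappaBar_of_sub hsub'
        omega
    have hABF : A.card + B.card ≤ F.card := by
      rw [← Finset.card_union_of_disjoint (Finset.disjoint_left.mpr
        (fun {e} h1 h2 => hdisjAB e h1 h2))]
      exact Finset.card_le_card (Finset.union_subset hAF hBF)
    -- final arithmetic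
    have hp1 : C1.card * k + k.choose 2 ≤ G1.edges.card + A.card := by
      have : k + C1.card - k = C1.card := by omega
      rw [this] at hIH1
      rw [← hhat1card]
      exact hIH1
    have hp2 : R.card * k + k.choose 2 ≤ G2.edges.card + B.card := by
      have : k + R.card - k = R.card := by omega
      rw [this] at hIH2
      rw [← hhat2card]
      exact hIH2
    have hgoalrw : (n - k) * k = C1.card * k + R.card * k := by
      have h1 : n - k = C1.card + R.card := by omega
      rw [h1, Nat.add_mul]
    rw [hgoalrw]
    -- now everything is linear
    have hES := hESF
    set es := (G.edges.filter (· ⊆ S)).card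
    set q := k.choose 2
    set p1 := C1.card * k
    set p2 := R.card * k
    omega

end FinsetHypergraph
/-- Every vertex-`k`-maximal graph (2-uniform hypergraph) on
`n ≥ k + 1 ≥ 3` vertices has at least `C(n,2) - C(n-k,2) = (n-k)k + k(k-1)/2` edges. -/
theorem stmt_9 (n k : ℕ) (hk : 2 ≤ k) (hn : k + 1 ≤ n)
    (G : FinsetHypergraph) (hcard : G.verts.card = n) (hG : G.VertexKMaximal 2 k) :
    n.choose 2 - (n - k).choose 2 ≤ G.edges.card ∧
      n.choose 2 - (n - k).choose 2 = (n - k) * k + k * (k - 1) / 2 := by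
  have hq : k.choose 2 = k * (k - 1) / 2 := Nat.choose_two_right k
  have hid : n.choose 2 = (n - k).choose 2 + (n - k) * k + k.choose 2 := by
    have h2 := FinsetHypergraph.choose_split (n - k) k
    have h : n - k + k = n := by omega
    rw [h] at h2
    exact h2
  have hb := FinsetHypergraph.main_bound hk n G hcard hn hG
  rw [hq] at hid hb
  set x := (n - k) * k with hx
  set y := k * (k - 1) / 2 with hy
  set c1 := n.choose 2 with hc1
  set c2 := (n - k).choose 2 with hc2
  exact ⟨by omega, by omega⟩
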